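/- arXiv:2401.08112 — 5 statements merged into one kernel-verified Lean document; each statement's English description precedes it below -/
import Mathlib

section
/- For every integrable real-valued random variable ξ on (Ω, ℱ, ℙ), the two iterated conditional expectations with respect to the overlapping information σ-algebras agree and equal the conditional expectation on the common information: 𝔼[𝔼[ξ | 𝒢¹] | 𝒢²] = 𝔼[ξ | 𝒞] = 𝔼[𝔼[ξ | 𝒢²] | 𝒢¹] ℙ-almost surely. (This is the identity ξ̌̂ := 𝔼[𝔼[ξ|𝒢¹ₜ]|𝒢²ₜ] ≡ 𝔼[𝔼[ξ|𝒢²ₜ]|𝒢¹ₜ] asserted in Section 3 of the paper.) -/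
open MeasureTheory ProbabilityTheory

section Aux

/-- Factorization of set integrals over product sets, by independence. -/
lemma key_setIntegral_factor {Ω : Type*} {m₁ m₂ : MeasurableSpace Ω}
    {mΩ : MeasurableSpace Ω} {μ : Measure Ω} [IsProbabilityMeasure μ]
    (h₁ : m₁ ≤ mΩ) (h₂ : m₂ ≤ mΩ)
    (hind : Indep m₁ m₂ μ) {f : Ω → ℝ} (hf : Integrable f μ)
    (hfm : StronglyMeasurable[m₁] f) {b c : Set Ω}
    (hb : MeasurableSet[m₂] b) (hc : MeasurableSet[m₁] c) :
    ∫ x in c ∩ b, f x ∂μ = (μ b).toReal * ∫ x in c, f x ∂μ := by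
  set g : Ω → ℝ := c.indicator f with hg
  have hgm : StronglyMeasurable[m₁] g := hfm.indicator hc
  have hgi : Integrable g μ := hf.indicator (h₁ _ hc)
  haveI : SigmaFinite (μ.trim h₂) := by
    have : IsFiniteMeasure (μ.trim h₂) := isFiniteMeasure_trim h₂
    infer_instance
  have hce := condExp_indep_eq h₁ h₂ hgm hind (μ := μ)
  have h1 : ∫ x in c ∩ b, f x ∂μ = ∫ x in b, g x ∂μ := by
    rw [hg, setIntegral_indicator (h₁ _ hc), Set.inter_comm]
  have h2 : ∫ x in b, g x ∂μ = ∫ x in b, (μ[g|m₂]) x ∂μ :=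
    (setIntegral_condExp h₂ hgi hb).symm
  have h3 : ∫ x in b, (μ[g|m₂]) x ∂μ = ∫ x in b, (fun _ => ∫ y, g y ∂μ) x ∂μ :=
    setIntegral_congr_ae (h₂ _ hb) (hce.mono fun x hx _ => hx)
  have h4 : ∫ x in b, (fun _ => ∫ y, g y ∂μ) x ∂μ = (μ b).toReal * ∫ y, g y ∂μ := by
    rw [setIntegral_const, smul_eq_mul, measureReal_def]
  have h5 : ∫ y, g y ∂μ = ∫ x in c, f x ∂μ := by
    rw [hg, integral_indicator (h₁ _ hc)]
  rw [h1, h2, h3, h4, h5]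

/-- If `f` is `m₁`-measurable and `m₁` is independent of `m₂`, then conditioning on
`m₂ ⊔ m₃` for `m₃ ≤ m₁` is the same as conditioning on `m₃`. -/
lemma condexp_sup_of_indep {Ω : Type*} {m₁ m₂ m₃ : MeasurableSpace Ω}
    {mΩ : MeasurableSpace Ω} {μ : Measure Ω} [IsProbabilityMeasure μ]
    (h₁ : m₁ ≤ mΩ) (h₂ : m₂ ≤ mΩ)
    (h₃ : m₃ ≤ mΩ) (h₃₁ : m₃ ≤ m₁) (hind : Indep m₁ m₂ μ) {f : Ω → ℝ}
    (hf : Integrable f μ) (hfm : StronglyMeasurable[m₁] f) :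
    μ[f | m₂ ⊔ m₃] =ᵐ[μ] μ[f | m₃] := by
  have hsup : m₂ ⊔ m₃ ≤ mΩ := sup_le h₂ h₃
  haveI : SigmaFinite (μ.trim hsup) := by
    have : IsFiniteMeasure (μ.trim hsup) := isFiniteMeasure_trim hsup
    infer_instance
  haveI : SigmaFinite (μ.trim h₃) := by
    have : IsFiniteMeasure (μ.trim h₃) := isFiniteMeasure_trim h₃
    infer_instance
  set g : Ω → ℝ := μ[f | m₃] with hg
  have hgm : StronglyMeasurable[m₁] g := stronglyMeasurable_condExp.mono h₃₁
  have hgi : Integrable g μ := integrable_condExp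
  -- the generating π-system
  set C : Set (Set Ω) := {s | ∃ t₂ t₃, MeasurableSet[m₂] t₂ ∧ MeasurableSet[m₃] t₃ ∧
    s = t₂ ∩ t₃} with hC
  have hgen : (m₂ ⊔ m₃) = MeasurableSpace.generateFrom C := by
    refine le_antisymm (sup_le ?_ ?_) (MeasurableSpace.generateFrom_le ?_)
    · intro t ht
      exact MeasurableSpace.measurableSet_generateFrom
        ⟨t, Set.univ, ht, MeasurableSet.univ, by simp⟩
    · intro t ht
      exact MeasurableSpace.measurableSet_generateFrom
        ⟨Set.univ, t, MeasurableSet.univ, ht, by simp⟩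
    · rintro s ⟨t₂, t₃, ht₂, ht₃, rfl⟩
      exact ((le_sup_left : m₂ ≤ m₂ ⊔ m₃) _ ht₂).inter ((le_sup_right : m₃ ≤ m₂ ⊔ m₃) _ ht₃)
  have hpi : IsPiSystem C := by
    rintro s ⟨t₂, t₃, ht₂, ht₃, rfl⟩ s' ⟨t₂', t₃', ht₂', ht₃', rfl⟩ -
    exact ⟨t₂ ∩ t₂', t₃ ∩ t₃', ht₂.inter ht₂', ht₃.inter ht₃', by
      rw [Set.inter_inter_inter_comm]⟩
  -- the main set-integral equality
  have hint : ∀ s, MeasurableSet[m₂ ⊔ m₃] s → ∫ x in s, f x ∂μ = ∫ x in s, g x ∂μ := by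
    have := MeasurableSpace.induction_on_inter (m := m₂ ⊔ m₃)
      (C := fun s _ => ∫ x in s, f x ∂μ = ∫ x in s, g x ∂μ) hgen hpi (by simp) ?_ ?_ ?_
    · exact fun s hs => this s hs
    · rintro s ⟨t₂, t₃, ht₂, ht₃, rfl⟩
      rw [Set.inter_comm,
        key_setIntegral_factor h₁ h₂ hind hf hfm ht₂ (h₃₁ _ ht₃),
        key_setIntegral_factor h₁ h₂ hind hgi hgm ht₂ (h₃₁ _ ht₃),
        setIntegral_condExp h₃ hf ht₃]
    · intro t ht hteq
      have htm : MeasurableSet t := hsup _ ht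
      have h1 := integral_add_compl htm hf
      have h2 := integral_add_compl htm hgi
      have h3 : ∫ x, f x ∂μ = ∫ x, g x ∂μ := (integral_condExp h₃ (μ := μ) (f := f)).symm
      linarith
    · intro s hdisj hm heq
      rw [integral_iUnion (fun i => hsup _ (hm i)) hdisj hf.integrableOn,
        integral_iUnion (fun i => hsup _ (hm i)) hdisj hgi.integrableOn]
      exact tsum_congr heq
  refine (ae_eq_condExp_of_forall_setIntegral_eq hsup hf
    (fun s _ _ => hgi.integrableOn) (fun s hs _ => (hint s hs).symm)
    ((stronglyMeasurable_condExp.mono (le_sup_right : m₃ ≤ m₂ ⊔ m₃)).aestronglyMeasurable)).symm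

end Aux

/-- For overlapping information σ-algebras `𝒢¹ = 𝒜 ⊔ 𝒞` and
`𝒢² = ℬ ⊔ 𝒞` built from mutually independent σ-algebras `𝒜, ℬ, 𝒞`, the iterated
conditional expectations of an integrable random variable `ξ` agree and equal the
conditional expectation on the common information `𝒞`:
`𝔼[𝔼[ξ | 𝒢¹] | 𝒢²] = 𝔼[ξ | 𝒞] = 𝔼[𝔼[ξ | 𝒢²] | 𝒢¹]` a.s. -/
theorem iterated_condexp_overlapping_information
    {Ω : Type*} {mΩ : MeasurableSpace Ω} {μ : Measure Ω} [IsProbabilityMeasure μ]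
    (𝒜 ℬ 𝒞 : MeasurableSpace Ω)
    (h𝒜 : 𝒜 ≤ mΩ) (hℬ : ℬ ≤ mΩ) (h𝒞 : 𝒞 ≤ mΩ)
    (hindep : ProbabilityTheory.iIndep ![𝒜, ℬ, 𝒞] μ)
    (ξ : Ω → ℝ) (hξ : Integrable ξ μ) :
    μ[ μ[ξ | 𝒜 ⊔ 𝒞] | ℬ ⊔ 𝒞] =ᵐ[μ] μ[ξ | 𝒞]
      ∧ μ[ μ[ξ | ℬ ⊔ 𝒞] | 𝒜 ⊔ 𝒞] =ᵐ[μ] μ[ξ | 𝒞] := by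
  have h_le : ∀ i, (![𝒜, ℬ, 𝒞] : Fin 3 → MeasurableSpace Ω) i ≤ mΩ := by
    intro i; fin_cases i <;> simpa
  have hAC : 𝒜 ⊔ 𝒞 ≤ mΩ := sup_le h𝒜 h𝒞
  have hBC : ℬ ⊔ 𝒞 ≤ mΩ := sup_le hℬ h𝒞
  haveI : SigmaFinite (μ.trim hAC) := by
    have : IsFiniteMeasure (μ.trim hAC) := isFiniteMeasure_trim hAC
    infer_instance
  haveI : SigmaFinite (μ.trim hBC) := by
    have : IsFiniteMeasure (μ.trim hBC) := isFiniteMeasure_trim hBC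
    infer_instance
  haveI : SigmaFinite (μ.trim h𝒞) := by
    have : IsFiniteMeasure (μ.trim h𝒞) := isFiniteMeasure_trim h𝒞
    infer_instance
  have hACB : Indep (𝒜 ⊔ 𝒞) ℬ μ := by
    have h := indep_iSup_of_disjoint h_le hindep
      (S := {0, 2}) (T := {1}) (by simp)
    have e1 : (⨆ i ∈ ({0, 2} : Set (Fin 3)), (![𝒜, ℬ, 𝒞] : Fin 3 → MeasurableSpace Ω) i)
        = 𝒜 ⊔ 𝒞 := by rw [iSup_insert, iSup_singleton]; simp
    have e2 : (⨆ i ∈ ({1} : Set (Fin 3)), (![𝒜, ℬ, 𝒞] : Fin 3 → MeasurableSpace Ω) i)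
        = ℬ := by rw [iSup_singleton]; simp
    rwa [e1, e2] at h
  have hBCA : Indep (ℬ ⊔ 𝒞) 𝒜 μ := by
    have h := indep_iSup_of_disjoint h_le hindep
      (S := {1, 2}) (T := {0}) (by simp)
    have e1 : (⨆ i ∈ ({1, 2} : Set (Fin 3)), (![𝒜, ℬ, 𝒞] : Fin 3 → MeasurableSpace Ω) i)
        = ℬ ⊔ 𝒞 := by rw [iSup_insert, iSup_singleton]; simp
    have e2 : (⨆ i ∈ ({0} : Set (Fin 3)), (![𝒜, ℬ, 𝒞] : Fin 3 → MeasurableSpace Ω) i)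
        = 𝒜 := by rw [iSup_singleton]; simp
    rwa [e1, e2] at h
  have htower1 : μ[ μ[ξ | 𝒜 ⊔ 𝒞] | 𝒞] =ᵐ[μ] μ[ξ | 𝒞] :=
    condExp_condExp_of_le le_sup_right hAC
  have htower2 : μ[ μ[ξ | ℬ ⊔ 𝒞] | 𝒞] =ᵐ[μ] μ[ξ | 𝒞] :=
    condExp_condExp_of_le le_sup_right hBC
  constructor
  · exact (condexp_sup_of_indep hAC hℬ h𝒞 le_sup_right hACB integrable_condExp
      stronglyMeasurable_condExp).trans htower1
  · exact (condexp_sup_of_indep hBC h𝒜 h𝒞 le_sup_right hBCA integrable_condExp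
      stronglyMeasurable_condExp).trans htower2
end

section
/- For every integrable real-valued random variable ξ, the doubly filtered estimate ξ̌̂ := 𝔼[𝔼[ξ | 𝒢¹] | 𝒢²] is left fixed by conditioning on either information set: 𝔼[ξ̌̂ | 𝒢¹] = ξ̌̂ and 𝔼[ξ̌̂ | 𝒢²] = ξ̌̂ ℙ-almost surely. -/
open MeasureTheory ProbabilityTheory

/-- For every integrable real random variable `ξ`, the doubly filtered
estimate `ξ̌̂ := 𝔼[𝔼[ξ | 𝒢¹] | 𝒢²]` (with `𝒢¹ = 𝒜 ⊔ 𝒞`, `𝒢² = ℬ ⊔ 𝒞`) is left fixed by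
conditioning on either information set: `𝔼[ξ̌̂ | 𝒢¹] = ξ̌̂` and `𝔼[ξ̌̂ | 𝒢²] = ξ̌̂` ℙ-a.s. -/
private lemma doubly_filtered_estimate_fixed_aux
    {Ω : Type*} (𝒜 ℬ 𝒞 : MeasurableSpace Ω)
    {mΩ : MeasurableSpace Ω} {μ : Measure Ω} [IsProbabilityMeasure μ]
    (h𝒜 : 𝒜 ≤ mΩ) (hℬ : ℬ ≤ mΩ) (h𝒞 : 𝒞 ≤ mΩ)
    (hindep : ProbabilityTheory.iIndep ![𝒜, ℬ, 𝒞] μ)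
    (ξ : Ω → ℝ) (hξ : Integrable ξ μ) :
    μ[ (μ[ (μ[ξ | 𝒜 ⊔ 𝒞]) | ℬ ⊔ 𝒞]) | 𝒜 ⊔ 𝒞] =ᵐ[μ] μ[ (μ[ξ | 𝒜 ⊔ 𝒞]) | ℬ ⊔ 𝒞]
      ∧ μ[ (μ[ (μ[ξ | 𝒜 ⊔ 𝒞]) | ℬ ⊔ 𝒞]) | ℬ ⊔ 𝒞] =ᵐ[μ] μ[ (μ[ξ | 𝒜 ⊔ 𝒞]) | ℬ ⊔ 𝒞] := by
  have hG1 : 𝒜 ⊔ 𝒞 ≤ mΩ := sup_le h𝒜 h𝒞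
  have hG2 : ℬ ⊔ 𝒞 ≤ mΩ := sup_le hℬ h𝒞
  -- independence of 𝒜 ⊔ 𝒞 and ℬ
  have h_le : ∀ i, (![𝒜, ℬ, 𝒞] : Fin 3 → MeasurableSpace Ω) i ≤ mΩ := by
    intro i; fin_cases i <;> simpa
  have hIndep : Indep (𝒜 ⊔ 𝒞) ℬ μ := by
    have hdisj : Disjoint ({0, 2} : Set (Fin 3)) ({1} : Set (Fin 3)) := by
      rw [Set.disjoint_left]
      rintro x (rfl | rfl) hx <;> simp at hx
    have h := indep_iSup_of_disjoint h_le hindep hdisj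
    have e1 : (⨆ i ∈ ({0, 2} : Set (Fin 3)), (![𝒜, ℬ, 𝒞] : Fin 3 → MeasurableSpace Ω) i)
        = 𝒜 ⊔ 𝒞 := by
      rw [iSup_insert, iSup_singleton]
      norm_num
      rfl
    have e2 : (⨆ i ∈ ({1} : Set (Fin 3)), (![𝒜, ℬ, 𝒞] : Fin 3 → MeasurableSpace Ω) i)
        = ℬ := by
      rw [iSup_singleton]
      norm_num
    rwa [e1, e2] at h
  set η : Ω → ℝ := μ[ξ | 𝒜 ⊔ 𝒞] with hη_def
  have hη_int : Integrable η μ := integrable_condExp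
  have hη_meas : StronglyMeasurable[𝒜 ⊔ 𝒞] η := stronglyMeasurable_condExp
  set g : Ω → ℝ := μ[η | 𝒞] with hg_def
  have hg_int : Integrable g μ := integrable_condExp
  have hg_meas : StronglyMeasurable[𝒜 ⊔ 𝒞] g :=
    stronglyMeasurable_condExp.mono le_sup_right
  -- key computation on rectangles
  have key : ∀ (f : Ω → ℝ), Integrable f μ → StronglyMeasurable[𝒜 ⊔ 𝒞] f →
      ∀ b c : Set Ω, MeasurableSet[ℬ] b → MeasurableSet[𝒞] c →
      ∫ x in b ∩ c, f x ∂μ = (μ b).toReal * ∫ x in c, f x ∂μ := by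
    intro f hf hfm b c hb hc
    have hcΩ : MeasurableSet[mΩ] c := h𝒞 c hc
    have hY : StronglyMeasurable[𝒜 ⊔ 𝒞] (c.indicator f) :=
      hfm.indicator ((le_sup_right : 𝒞 ≤ 𝒜 ⊔ 𝒞) c hc)
    have hYint : Integrable (c.indicator f) μ := hf.indicator hcΩ
    have hcond : μ[c.indicator f | ℬ] =ᵐ[μ] fun _ => ∫ x, c.indicator f x ∂μ :=
      condExp_indep_eq hG1 hℬ hY hIndep
    calc ∫ x in b ∩ c, f x ∂μ
        = ∫ x in b, c.indicator f x ∂μ := (setIntegral_indicator hcΩ).symm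
      _ = ∫ x in b, (μ[c.indicator f | ℬ]) x ∂μ := (setIntegral_condExp hℬ hYint hb).symm
      _ = ∫ _x in b, (∫ x, c.indicator f x ∂μ) ∂μ :=
          integral_congr_ae (ae_restrict_of_ae hcond)
      _ = (μ b).toReal * ∫ x, c.indicator f x ∂μ := by
          rw [setIntegral_const, smul_eq_mul, measureReal_def]
      _ = (μ b).toReal * ∫ x in c, f x ∂μ := by rw [integral_indicator hcΩ]
  -- the π-system of rectangles generating ℬ ⊔ 𝒞
  set p : Set (Set Ω) :=
    {s | ∃ b c : Set Ω, MeasurableSet[ℬ] b ∧ MeasurableSet[𝒞] c ∧ s = b ∩ c} with hp_def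
  have h_eq : (ℬ ⊔ 𝒞) = MeasurableSpace.generateFrom p := by
    refine le_antisymm (sup_le ?_ ?_) ?_
    · intro s hs
      exact MeasurableSpace.measurableSet_generateFrom
        ⟨s, Set.univ, hs, @MeasurableSet.univ Ω 𝒞, (Set.inter_univ s).symm⟩
    · intro s hs
      exact MeasurableSpace.measurableSet_generateFrom
        ⟨Set.univ, s, @MeasurableSet.univ Ω ℬ, hs, (Set.univ_inter s).symm⟩
    · rw [MeasurableSpace.generateFrom_le_iff]
      rintro s ⟨b, c, hb, hc, rfl⟩
      exact ((le_sup_left : ℬ ≤ ℬ ⊔ 𝒞) b hb).inter ((le_sup_right : 𝒞 ≤ ℬ ⊔ 𝒞) c hc)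
  have h_pi : IsPiSystem p := by
    rintro s ⟨b, c, hb, hc, rfl⟩ t ⟨b', c', hb', hc', rfl⟩ -
    exact ⟨b ∩ b', c ∩ c', hb.inter hb', hc.inter hc',
      by rw [Set.inter_inter_inter_comm]⟩
  -- set integrals of η and g agree on all of ℬ ⊔ 𝒞
  have hsets : ∀ s : Set Ω, MeasurableSet[ℬ ⊔ 𝒞] s →
      ∫ x in s, η x ∂μ = ∫ x in s, g x ∂μ := by
    intro s hs
    refine @MeasurableSpace.induction_on_inter Ω (ℬ ⊔ 𝒞)
      (fun s _ => ∫ x in s, η x ∂μ = ∫ x in s, g x ∂μ) p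
      h_eq h_pi ?_ ?_ ?_ ?_ s hs
    · simp
    · rintro t ⟨b, c, hb, hc, rfl⟩
      rw [key η hη_int hη_meas b c hb hc, key g hg_int hg_meas b c hb hc,
        setIntegral_condExp h𝒞 hη_int hc]
    · intro t htm ht
      have htΩ : MeasurableSet[mΩ] t := hG2 t htm
      have h1 := integral_add_compl htΩ hη_int
      have h2 := integral_add_compl htΩ hg_int
      have h3 : ∫ x, g x ∂μ = ∫ x, η x ∂μ := integral_condExp h𝒞
      linarith
    · intro f hdisj hmeas hC
      have hmΩ : ∀ i, MeasurableSet[mΩ] (f i) := fun i => hG2 _ (hmeas i)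
      rw [integral_iUnion hmΩ hdisj hη_int.integrableOn,
        integral_iUnion hmΩ hdisj hg_int.integrableOn]
      exact tsum_congr hC
  -- hence μ[η | ℬ ⊔ 𝒞] = μ[η | 𝒞] a.e.
  have hmain : μ[η | ℬ ⊔ 𝒞] =ᵐ[μ] g := by
    refine (ae_eq_condExp_of_forall_setIntegral_eq hG2 hη_int
      (fun s _ _ => hg_int.integrableOn) (fun s hs _ => (hsets s hs).symm)
      (stronglyMeasurable_condExp.mono (le_sup_right : 𝒞 ≤ ℬ ⊔ 𝒞)).aestronglyMeasurable).symm
  constructor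
  · have h2 : μ[g | 𝒜 ⊔ 𝒞] = g :=
      condExp_of_stronglyMeasurable hG1 hg_meas hg_int
    calc μ[(μ[η | ℬ ⊔ 𝒞]) | 𝒜 ⊔ 𝒞] =ᵐ[μ] μ[g | 𝒜 ⊔ 𝒞] := condExp_congr_ae hmain
      _ = g := h2
      _ =ᵐ[μ] μ[η | ℬ ⊔ 𝒞] := hmain.symm
  · have h2 : μ[g | ℬ ⊔ 𝒞] = g :=
      condExp_of_stronglyMeasurable hG2
        (stronglyMeasurable_condExp.mono (le_sup_right : 𝒞 ≤ ℬ ⊔ 𝒞)) hg_int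
    calc μ[(μ[η | ℬ ⊔ 𝒞]) | ℬ ⊔ 𝒞] =ᵐ[μ] μ[g | ℬ ⊔ 𝒞] := condExp_congr_ae hmain
      _ = g := h2
      _ =ᵐ[μ] μ[η | ℬ ⊔ 𝒞] := hmain.symm

theorem doubly_filtered_estimate_fixed
    {Ω : Type*} {mΩ : MeasurableSpace Ω} {μ : Measure Ω} [IsProbabilityMeasure μ]
    (𝒜 ℬ 𝒞 : MeasurableSpace Ω)
    (h𝒜 : 𝒜 ≤ mΩ) (hℬ : ℬ ≤ mΩ) (h𝒞 : 𝒞 ≤ mΩ)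
    (hindep : ProbabilityTheory.iIndep ![𝒜, ℬ, 𝒞] μ)
    (ξ : Ω → ℝ) (hξ : Integrable ξ μ) :
    μ[ (μ[ (μ[ξ | 𝒜 ⊔ 𝒞]) | ℬ ⊔ 𝒞]) | 𝒜 ⊔ 𝒞] =ᵐ[μ] μ[ (μ[ξ | 𝒜 ⊔ 𝒞]) | ℬ ⊔ 𝒞]
      ∧ μ[ (μ[ (μ[ξ | 𝒜 ⊔ 𝒞]) | ℬ ⊔ 𝒞]) | ℬ ⊔ 𝒞] =ᵐ[μ] μ[ (μ[ξ | 𝒜 ⊔ 𝒞]) | ℬ ⊔ 𝒞] :=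
  doubly_filtered_estimate_fixed_aux 𝒜 ℬ 𝒞 h𝒜 hℬ h𝒞 hindep ξ hξ
end

section
/- Let X be an integrable ℝⁿ-valued random vector and write X̂ := 𝔼[X | 𝒢¹], X̌ := 𝔼[X | 𝒢²], X̌̂ := 𝔼[X̂ | 𝒢²] (all componentwise). For real m×n matrices P₁, P₂, P₃, P₄ define Y := P₁X + P₂X̂ + P₃X̌ + P₄X̌̂. Then ℙ-almost surely: 𝔼[Y | 𝒢¹] = (P₁ + P₂)X̂ + (P₃ + P₄)X̌̂, 𝔼[Y | 𝒢²] = (P₁ + P₃)X̌ + (P₂ + P₄)X̌̂, and 𝔼[𝔼[Y | 𝒢¹] | 𝒢²] = (P₁ + P₂ + P₃ + P₄)X̌̂. (These are the paper's filtering relations (for Ŷ, Y̌ and Y̌̂) used to decouple the leaders' optimality system.) -/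
open MeasureTheory ProbabilityTheory Filter

section Aux

variable {Ω E F : Type*} [NormedAddCommGroup E] [NormedSpace ℝ E] [CompleteSpace E]
  [NormedAddCommGroup F] [NormedSpace ℝ F] [CompleteSpace F]

/-- Conditional expectation commutes with continuous linear maps. -/
lemma my_condexp_clm {m : MeasurableSpace Ω} {mΩ : MeasurableSpace Ω} {μ : Measure Ω}
    [IsFiniteMeasure μ] (hm : m ≤ mΩ) (L : E →L[ℝ] F) {f : Ω → E}
    (hf : Integrable f μ) :
    μ[(fun ω => L (f ω)) | m] =ᵐ[μ] fun ω => L ((μ[f | m]) ω) := by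
  refine (ae_eq_condExp_of_forall_setIntegral_eq hm (L.integrable_comp hf)
    (fun s _ _ => (L.integrable_comp integrable_condExp).integrableOn)
    (fun s hs _ => ?_)
    ((L.continuous.comp_stronglyMeasurable stronglyMeasurable_condExp).aestronglyMeasurable)).symm
  rw [L.integral_comp_comm integrable_condExp.integrableOn,
    L.integral_comp_comm hf.integrableOn, setIntegral_condExp hm hf hs]

/-- If `mA` is independent of `m₂`, `mC ≤ m₂` and `Z` is `m₂`-measurable, then
`𝔼[Z | mA ⊔ mC] = 𝔼[Z | mC]` a.e. -/
lemma my_condexp_indep_sup {mA mC m₂ : MeasurableSpace Ω} {mΩ : MeasurableSpace Ω}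
    {μ : Measure Ω} [IsProbabilityMeasure μ] (hA : mA ≤ mΩ) (hm₂ : m₂ ≤ mΩ) (hC : mC ≤ m₂)
    (hindep : ProbabilityTheory.Indep mA m₂ μ) {Z : Ω → E}
    (hZm : StronglyMeasurable[m₂] Z) (hZint : Integrable Z μ) :
    μ[Z | mA ⊔ mC] =ᵐ[μ] μ[Z | mC] := by
  have hC' : mC ≤ mΩ := hC.trans hm₂
  have hsup : mA ⊔ mC ≤ mΩ := sup_le hA hC'
  set π : Set (Set Ω) := {s | ∃ A C, MeasurableSet[mA] A ∧ MeasurableSet[mC] C ∧ s = A ∩ C}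
    with hπ
  have h_eq : mA ⊔ mC = MeasurableSpace.generateFrom π := by
    refine le_antisymm (sup_le ?_ ?_) (MeasurableSpace.generateFrom_le ?_)
    · exact fun s hs => MeasurableSpace.measurableSet_generateFrom
        ⟨s, Set.univ, hs, MeasurableSet.univ, (Set.inter_univ s).symm⟩
    · exact fun s hs => MeasurableSpace.measurableSet_generateFrom
        ⟨Set.univ, s, MeasurableSet.univ, hs, (Set.univ_inter s).symm⟩
    · rintro s ⟨A, C, hA', hC'', rfl⟩
      exact ((le_sup_left : mA ≤ mA ⊔ mC) _ hA').inter
        ((le_sup_right : mC ≤ mA ⊔ mC) _ hC'')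
  have h_pi : IsPiSystem π := by
    rintro s ⟨A₁, C₁, h₁, h₂, rfl⟩ t ⟨A₂, C₂, h₃, h₄, rfl⟩ -
    exact ⟨A₁ ∩ A₂, C₁ ∩ C₂, h₁.inter h₃, h₂.inter h₄, by
      ext x; simp [Set.mem_inter_iff]; tauto⟩
  -- the basic computation: for m₂-measurable integrable W, ∫_{A∩C} W = μ(A) • ∫_C W
  have hbasic : ∀ (W : Ω → E), StronglyMeasurable[m₂] W → Integrable W μ →
      ∀ (A C : Set Ω), MeasurableSet[mA] A → MeasurableSet[mC] C →
      ∫ x in A ∩ C, W x ∂μ = (μ A).toReal • ∫ x in C, W x ∂μ := by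
    intro W hWm hWint A C hAm hCm
    have hCm₂ : MeasurableSet[m₂] C := hC _ hCm
    have hWind : Integrable (C.indicator W) μ := hWint.indicator (hm₂ _ hCm₂)
    have h1 : μ[C.indicator W | mA] =ᵐ[μ] fun _ => ∫ x, C.indicator W x ∂μ :=
      condExp_indep_eq hm₂ hA (hWm.indicator hCm₂) hindep.symm
    have h2 : ∫ x in A, C.indicator W x ∂μ = ∫ x in A, (fun _ => ∫ y, C.indicator W y ∂μ) x ∂μ := by
      rw [← setIntegral_condExp hA hWind hAm]
      exact setIntegral_congr_ae (hA _ hAm) (h1.mono fun x hx _ => hx)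
    rw [← setIntegral_indicator (hm₂ _ hCm₂), h2, setIntegral_const,
      integral_indicator (hm₂ _ hCm₂)]
    rfl
  -- ∫_s (μ[Z|mC]) = ∫_s Z for all s ∈ mA ⊔ mC
  have main : ∀ s, MeasurableSet[mA ⊔ mC] s →
      ∫ x in s, (μ[Z | mC]) x ∂μ = ∫ x in s, Z x ∂μ := by
    intro s hs
    refine MeasurableSpace.induction_on_inter (m := mA ⊔ mC)
      (C := fun s _ => ∫ x in s, (μ[Z | mC]) x ∂μ = ∫ x in s, Z x ∂μ)
      h_eq h_pi (by simp) ?_ ?_ ?_ s hs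
    · rintro t ⟨A, C, hAm, hCm, rfl⟩
      rw [hbasic Z hZm hZint A C hAm hCm,
        hbasic (μ[Z | mC]) (stronglyMeasurable_condExp.mono hC) integrable_condExp A C hAm hCm,
        setIntegral_condExp hC' hZint hCm]
    · intro t ht hteq
      have h1 := integral_add_compl (hsup _ ht) (integrable_condExp (f := Z) (m := mC) (μ := μ))
      have h2 := integral_add_compl (hsup _ ht) hZint
      have h3 : ∫ x, (μ[Z | mC]) x ∂μ = ∫ x, Z x ∂μ := integral_condExp hC'
      rw [eq_sub_of_add_eq' h1, eq_sub_of_add_eq' h2, hteq, h3]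
    · intro f hdisj hfm hfeq
      have hg := hasSum_integral_iUnion (fun i => hsup _ (hfm i)) hdisj
        (integrable_condExp (f := Z) (m := mC) (μ := μ)).integrableOn
      have hz := hasSum_integral_iUnion (fun i => hsup _ (hfm i)) hdisj hZint.integrableOn
      have : (fun i => ∫ x in f i, (μ[Z | mC]) x ∂μ) = fun i => ∫ x in f i, Z x ∂μ :=
        funext fun i => hfeq i
      exact hg.unique (this ▸ hz)
  exact (ae_eq_condExp_of_forall_setIntegral_eq hsup hZint
    (fun s _ _ => integrable_condExp.integrableOn)
    (fun s hs _ => main s hs)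
    ((stronglyMeasurable_condExp.mono (le_sup_right : mC ≤ mA ⊔ mC)).aestronglyMeasurable)).symm

/-- Conditional expectation commutes with `Matrix.mulVec`. -/
lemma my_condexp_mulVec {m' : MeasurableSpace Ω} {mΩ : MeasurableSpace Ω} {μ : Measure Ω}
    [IsFiniteMeasure μ] {n m : ℕ} (P : Matrix (Fin m) (Fin n) ℝ) (hm' : m' ≤ mΩ)
    {f : Ω → Fin n → ℝ} (hf : Integrable f μ) :
    μ[(fun ω => P.mulVec (f ω)) | m'] =ᵐ[μ] fun ω => P.mulVec ((μ[f | m']) ω) := by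
  simpa using my_condexp_clm hm' (LinearMap.toContinuousLinearMap P.mulVecLin) hf

lemma my_integrable_mulVec {mΩ : MeasurableSpace Ω} {μ : Measure Ω}
    {n m : ℕ} (P : Matrix (Fin m) (Fin n) ℝ) {f : Ω → Fin n → ℝ} (hf : Integrable f μ) :
    Integrable (fun ω => P.mulVec (f ω)) μ := by
  simpa using (LinearMap.toContinuousLinearMap P.mulVecLin).integrable_comp hf

end Aux

/-- Filtering relations for the leaders' decoupling. With
`X̂ = 𝔼[X | 𝒢¹]`, `X̌ = 𝔼[X | 𝒢²]`, `X̌̂ = 𝔼[X̂ | 𝒢²]` and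
`Y = P₁X + P₂X̂ + P₃X̌ + P₄X̌̂`, one has ℙ-a.s.
`𝔼[Y | 𝒢¹] = (P₁+P₂)X̂ + (P₃+P₄)X̌̂`, `𝔼[Y | 𝒢²] = (P₁+P₃)X̌ + (P₂+P₄)X̌̂`, and
`𝔼[𝔼[Y | 𝒢¹] | 𝒢²] = (P₁+P₂+P₃+P₄)X̌̂`. -/
theorem filtering_relations_for_Y
    {Ω : Type*} {mΩ : MeasurableSpace Ω} {μ : Measure Ω} [IsProbabilityMeasure μ]
    (𝒜 ℬ 𝒞 : MeasurableSpace Ω)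
    (h𝒜 : 𝒜 ≤ mΩ) (hℬ : ℬ ≤ mΩ) (h𝒞 : 𝒞 ≤ mΩ)
    (hindep : ProbabilityTheory.iIndep ![𝒜, ℬ, 𝒞] μ)
    (n m : ℕ) (X : Ω → (Fin n → ℝ)) (hX : Integrable X μ)
    (P₁ P₂ P₃ P₄ : Matrix (Fin m) (Fin n) ℝ)
    (Xhat Xcheck Xcheckhat : Ω → (Fin n → ℝ)) (Y : Ω → (Fin m → ℝ))
    (hXhat : Xhat = μ[X | 𝒜 ⊔ 𝒞])
    (hXcheck : Xcheck = μ[X | ℬ ⊔ 𝒞])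
    (hXcheckhat : Xcheckhat = μ[Xhat | ℬ ⊔ 𝒞])
    (hY : Y = fun ω =>
      P₁.mulVec (X ω) + P₂.mulVec (Xhat ω) + P₃.mulVec (Xcheck ω) + P₄.mulVec (Xcheckhat ω)) :
    (μ[Y | 𝒜 ⊔ 𝒞] =ᵐ[μ] fun ω =>
        (P₁ + P₂).mulVec (Xhat ω) + (P₃ + P₄).mulVec (Xcheckhat ω))
      ∧ (μ[Y | ℬ ⊔ 𝒞] =ᵐ[μ] fun ω =>
        (P₁ + P₃).mulVec (Xcheck ω) + (P₂ + P₄).mulVec (Xcheckhat ω))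
      ∧ (μ[ (μ[Y | 𝒜 ⊔ 𝒞]) | ℬ ⊔ 𝒞] =ᵐ[μ] fun ω =>
        (P₁ + P₂ + P₃ + P₄).mulVec (Xcheckhat ω)) := by
  have hG₁ : 𝒜 ⊔ 𝒞 ≤ mΩ := sup_le h𝒜 h𝒞
  have hG₂ : ℬ ⊔ 𝒞 ≤ mΩ := sup_le hℬ h𝒞
  -- independence of 𝒜 with ℬ ⊔ 𝒞, and of ℬ with 𝒜 ⊔ 𝒞
  have hle : ∀ i, ![𝒜, ℬ, 𝒞] i ≤ mΩ := by
    intro i; fin_cases i <;> simpa using ‹_›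
  have hAB : ProbabilityTheory.Indep 𝒜 (ℬ ⊔ 𝒞) μ := by
    have h := indep_iSup_of_disjoint hle hindep (S := {0}) (T := {1, 2})
      (by simp [Set.disjoint_left])
    rw [iSup_singleton, iSup_insert, iSup_singleton] at h
    exact h
  have hBA : ProbabilityTheory.Indep ℬ (𝒜 ⊔ 𝒞) μ := by
    have h := indep_iSup_of_disjoint hle hindep (S := {1}) (T := {0, 2})
      (by simp [Set.disjoint_left])
    rw [iSup_singleton, iSup_insert, iSup_singleton] at h
    exact h
  subst hY hXcheckhat hXcheck hXhat
  set Xhat := μ[X | 𝒜 ⊔ 𝒞] with hXhat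
  set Xcheck := μ[X | ℬ ⊔ 𝒞] with hXcheck
  set Xch := μ[Xhat | ℬ ⊔ 𝒞] with hXch
  have hXhat_int : Integrable Xhat μ := integrable_condExp
  have hXcheck_int : Integrable Xcheck μ := integrable_condExp
  have hXch_int : Integrable Xch μ := integrable_condExp
  -- key filtering identities
  have kcheck : μ[Xcheck | 𝒜 ⊔ 𝒞] =ᵐ[μ] μ[X | 𝒞] :=
    (my_condexp_indep_sup h𝒜 hG₂ le_sup_right hAB stronglyMeasurable_condExp
      integrable_condExp).trans (condExp_condExp_of_le le_sup_right hG₂)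
  have kch : Xch =ᵐ[μ] μ[X | 𝒞] :=
    (my_condexp_indep_sup hℬ hG₁ le_sup_right hBA stronglyMeasurable_condExp
      integrable_condExp).trans (condExp_condExp_of_le le_sup_right hG₁)
  have hZ₀meas : StronglyMeasurable[𝒜 ⊔ 𝒞] (μ[X | 𝒞]) :=
    stronglyMeasurable_condExp.mono le_sup_right
  have kchG₁ : μ[Xch | 𝒜 ⊔ 𝒞] =ᵐ[μ] μ[X | 𝒞] :=
    (condExp_congr_ae kch).trans
      (by rw [condExp_of_stronglyMeasurable hG₁ hZ₀meas integrable_condExp])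
  -- integrability of the four summands
  have hi1 : Integrable (fun ω => P₁.mulVec (X ω)) μ := my_integrable_mulVec _ hX
  have hi2 : Integrable (fun ω => P₂.mulVec (Xhat ω)) μ := my_integrable_mulVec _ hXhat_int
  have hi3 : Integrable (fun ω => P₃.mulVec (Xcheck ω)) μ := my_integrable_mulVec _ hXcheck_int
  have hi4 : Integrable (fun ω => P₄.mulVec (Xch ω)) μ := my_integrable_mulVec _ hXch_int
  have hYsum : (fun ω =>
      P₁.mulVec (X ω) + P₂.mulVec (Xhat ω) + P₃.mulVec (Xcheck ω) + P₄.mulVec (Xch ω)) =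
      ((fun ω => P₁.mulVec (X ω)) + (fun ω => P₂.mulVec (Xhat ω)))
      + (fun ω => P₃.mulVec (Xcheck ω)) + (fun ω => P₄.mulVec (Xch ω)) := rfl
  -- generic splitting of the conditional expectation of Y
  have hsplit : ∀ (m' : MeasurableSpace Ω), m' ≤ mΩ →
      μ[(fun ω => P₁.mulVec (X ω) + P₂.mulVec (Xhat ω) + P₃.mulVec (Xcheck ω)
        + P₄.mulVec (Xch ω)) | m'] =ᵐ[μ]
      μ[(fun ω => P₁.mulVec (X ω)) | m'] + μ[(fun ω => P₂.mulVec (Xhat ω)) | m']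
        + μ[(fun ω => P₃.mulVec (Xcheck ω)) | m'] + μ[(fun ω => P₄.mulVec (Xch ω)) | m'] := by
    intro m' hm'
    rw [hYsum]
    exact (condExp_add ((hi1.add hi2).add hi3) hi4 m').trans
      (((condExp_add (hi1.add hi2) hi3 m').trans
        (((condExp_add hi1 hi2 m').add EventuallyEq.rfl))).add EventuallyEq.rfl)
  -- Statement 1
  have e1 : μ[(fun ω => P₁.mulVec (X ω) + P₂.mulVec (Xhat ω) + P₃.mulVec (Xcheck ω)
      + P₄.mulVec (Xch ω)) | 𝒜 ⊔ 𝒞] =ᵐ[μ] fun ω =>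
      (P₁ + P₂).mulVec (Xhat ω) + (P₃ + P₄).mulVec (Xch ω) := by
    have t1 : μ[(fun ω => P₁.mulVec (X ω)) | 𝒜 ⊔ 𝒞] =ᵐ[μ]
        fun ω => P₁.mulVec (Xhat ω) := my_condexp_mulVec P₁ hG₁ hX
    have t2 : μ[(fun ω => P₂.mulVec (Xhat ω)) | 𝒜 ⊔ 𝒞] =ᵐ[μ]
        fun ω => P₂.mulVec (Xhat ω) := by
      refine (my_condexp_mulVec P₂ hG₁ hXhat_int).trans ?_
      rw [hXhat, condExp_of_stronglyMeasurable hG₁ stronglyMeasurable_condExp integrable_condExp]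
    have t3 : μ[(fun ω => P₃.mulVec (Xcheck ω)) | 𝒜 ⊔ 𝒞] =ᵐ[μ]
        fun ω => P₃.mulVec (Xch ω) :=
      (my_condexp_mulVec P₃ hG₁ hXcheck_int).trans
        ((kcheck.trans kch.symm).fun_comp P₃.mulVec)
    have t4 : μ[(fun ω => P₄.mulVec (Xch ω)) | 𝒜 ⊔ 𝒞] =ᵐ[μ]
        fun ω => P₄.mulVec (Xch ω) :=
      (my_condexp_mulVec P₄ hG₁ hXch_int).trans
        ((kchG₁.trans kch.symm).fun_comp P₄.mulVec)
    refine (hsplit _ hG₁).trans ((((t1.add t2).add t3).add t4).trans ?_)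
    refine Eventually.of_forall fun ω => ?_
    simp only [Pi.add_apply, Matrix.add_mulVec]
    abel
  -- Statement 2
  have e2 : μ[(fun ω => P₁.mulVec (X ω) + P₂.mulVec (Xhat ω) + P₃.mulVec (Xcheck ω)
      + P₄.mulVec (Xch ω)) | ℬ ⊔ 𝒞] =ᵐ[μ] fun ω =>
      (P₁ + P₃).mulVec (Xcheck ω) + (P₂ + P₄).mulVec (Xch ω) := by
    have t1 : μ[(fun ω => P₁.mulVec (X ω)) | ℬ ⊔ 𝒞] =ᵐ[μ]
        fun ω => P₁.mulVec (Xcheck ω) := my_condexp_mulVec P₁ hG₂ hX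
    have t2 : μ[(fun ω => P₂.mulVec (Xhat ω)) | ℬ ⊔ 𝒞] =ᵐ[μ]
        fun ω => P₂.mulVec (Xch ω) := my_condexp_mulVec P₂ hG₂ hXhat_int
    have t3 : μ[(fun ω => P₃.mulVec (Xcheck ω)) | ℬ ⊔ 𝒞] =ᵐ[μ]
        fun ω => P₃.mulVec (Xcheck ω) := by
      refine (my_condexp_mulVec P₃ hG₂ hXcheck_int).trans ?_
      rw [hXcheck, condExp_of_stronglyMeasurable hG₂ stronglyMeasurable_condExp integrable_condExp]
    have t4 : μ[(fun ω => P₄.mulVec (Xch ω)) | ℬ ⊔ 𝒞] =ᵐ[μ]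
        fun ω => P₄.mulVec (Xch ω) := by
      refine (my_condexp_mulVec P₄ hG₂ hXch_int).trans ?_
      rw [hXch, condExp_of_stronglyMeasurable hG₂ stronglyMeasurable_condExp integrable_condExp]
    refine (hsplit _ hG₂).trans ((((t1.add t2).add t3).add t4).trans ?_)
    refine Eventually.of_forall fun ω => ?_
    simp only [Pi.add_apply, Matrix.add_mulVec]
    abel
  refine ⟨e1, e2, ?_⟩
  -- Statement 3
  have hrhs1 : (fun ω => (P₁ + P₂).mulVec (Xhat ω) + (P₃ + P₄).mulVec (Xch ω)) =
      (fun ω => (P₁ + P₂).mulVec (Xhat ω)) + (fun ω => (P₃ + P₄).mulVec (Xch ω)) := rfl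
  have s1 : μ[(fun ω => (P₁ + P₂).mulVec (Xhat ω)) | ℬ ⊔ 𝒞] =ᵐ[μ]
      fun ω => (P₁ + P₂).mulVec (Xch ω) := my_condexp_mulVec _ hG₂ hXhat_int
  have s2 : μ[(fun ω => (P₃ + P₄).mulVec (Xch ω)) | ℬ ⊔ 𝒞] =ᵐ[μ]
      fun ω => (P₃ + P₄).mulVec (Xch ω) := by
    refine (my_condexp_mulVec _ hG₂ hXch_int).trans ?_
    rw [hXch, condExp_of_stronglyMeasurable hG₂ stronglyMeasurable_condExp integrable_condExp]
  refine ((condExp_congr_ae e1).trans ?_)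
  rw [hrhs1]
  refine (condExp_add (my_integrable_mulVec _ hXhat_int) (my_integrable_mulVec _ hXch_int) (ℬ ⊔ 𝒞)).trans
    ((s1.add s2).trans ?_)
  refine Eventually.of_forall fun ω => ?_
  simp only [Pi.add_apply, Matrix.add_mulVec]
  abel
end

section
/- (Lemma 3.1, solvability of the coupled Riccati system under symmetry.) Suppose the summed Riccati equation P̃' (t) + 2a₀(t)P̃(t) + (Σᵢ₌₁³ aᵢ(t)²)P̃(t) + Q₁(t) + Q₂(t) + B̄₁(t)P̃(t)² / (R(t) + S(t)P̃(t)) = 0 on [0,T], with P̃(T) = G₁ + G₂ and R(t) + S(t)P̃(t) > 0 for all t ∈ [0,T], admits a unique C¹ solution P̃. Then the coupled Riccati system P_j'(t) + 2a₀(t)P_j(t) + (Σᵢ₌₁³ aᵢ(t)²)P_j(t) + Q_j(t) + B̄₁(t)P_j(t)(P₁(t) + P₂(t)) / (R(t) + S(t)(P₁(t) + P₂(t))) = 0 for j = 1, 2, with terminal conditions P_j(T) = G_j, admits exactly one admissible solution pair (P₁, P₂), i.e. exactly one pair of C¹ functions on [0,T] satisfying these equations with R(t) + S(t)(P₁(t)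 + P₂(t)) > 0 for all t ∈ [0,T]. -/
open Set intervalIntegral

noncomputable def linP (α q : ℝ → ℝ) (T G : ℝ) : ℝ → ℝ :=
  fun t => Real.exp (-(∫ s in (0:ℝ)..t, α s)) *
    (Real.exp (∫ s in (0:ℝ)..T, α s) * G + ∫ s in t..T, Real.exp (∫ u in (0:ℝ)..s, α u) * q s)

lemma linP_T (α q : ℝ → ℝ) (T G : ℝ) : linP α q T G T = G := by
  simp only [linP, intervalIntegral.integral_same, add_zero, ← mul_assoc, ← Real.exp_add]
  simp

lemma linP_hasDerivAt {α q : ℝ → ℝ} (hα : Continuous α) (hq : Continuous q) (T G : ℝ) (t : ℝ) :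
    HasDerivAt (linP α q T G) (-(α t * linP α q T G t + q t)) t := by
  set I : ℝ → ℝ := fun u => ∫ s in (0:ℝ)..u, α s with hIdef
  have hI : ∀ b, HasDerivAt I (α b) b := fun b => (hα.integral_hasStrictDerivAt 0 b).hasDerivAt
  set φ : ℝ → ℝ := fun s => Real.exp (I s) * q s with hφdef
  have hφ : Continuous φ := by
    apply Continuous.mul _ hq
    exact Real.continuous_exp.comp (Differentiable.continuous (fun b => (hI b).differentiableAt))
  have hJ : HasDerivAt (fun u => ∫ s in u..T, φ s) (-(φ t)) t :=
    (intervalIntegral.integral_hasStrictDerivAt_left (hφ.intervalIntegrable t T)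
      (hφ.stronglyMeasurableAtFilter _ _) hφ.continuousAt).hasDerivAt
  have h1 : HasDerivAt (fun u => Real.exp (-(I u))) (Real.exp (-(I t)) * (-(α t))) t :=
    ((hI t).neg).exp
  have h2 : HasDerivAt (fun u => Real.exp (I T) * G + ∫ s in u..T, φ s) (-(φ t)) t :=
    hJ.const_add _
  have h3 : HasDerivAt (fun u => Real.exp (-(I u)) * (Real.exp (I T) * G + ∫ s in u..T, φ s)) _ t :=
    h1.mul h2
  have key : Real.exp (-(I t)) * Real.exp (I t) = 1 := by rw [← Real.exp_add]; simp
  convert h3 using 1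
  show -(α t * (Real.exp (-(I t)) * (Real.exp (I T) * G + ∫ s in t..T, φ s)) + q t)
      = Real.exp (-(I t)) * (-(α t)) * (Real.exp (I T) * G + ∫ s in t..T, φ s)
        + Real.exp (-(I t)) * (-(φ t))
  simp only [hφdef]
  linear_combination (q t) * key
  rfl

lemma linODE_unique (T : ℝ) (hT : 0 ≤ T) {α : ℝ → ℝ} (hα : Continuous α)
    (g gd : ℝ → ℝ)
    (hg : ∀ t ∈ Icc (0:ℝ) T, HasDerivWithinAt g (gd t) (Icc (0:ℝ) T) t)
    (heq : ∀ t ∈ Icc (0:ℝ) T, gd t = -(α t * g t))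
    (hgT : g T = 0) : ∀ t ∈ Icc (0:ℝ) T, g t = 0 := by
  set I : ℝ → ℝ := fun u => ∫ s in (0:ℝ)..u, α s with hIdef
  have hI : ∀ b, HasDerivAt I (α b) b := fun b => (hα.integral_hasStrictDerivAt 0 b).hasDerivAt
  set h : ℝ → ℝ := fun u => Real.exp (I u) * g u with hhdef
  have hh : ∀ t ∈ Icc (0:ℝ) T, HasDerivWithinAt h 0 (Icc (0:ℝ) T) t := by
    intro t ht
    have : HasDerivWithinAt (fun u => Real.exp (I u) * g u) _ (Icc (0:ℝ) T) t :=
      ((hI t).exp.hasDerivWithinAt.mul (hg t ht))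
    convert this using 1
    rw [heq t ht]; ring
  intro t ht
  have hb := (convex_Icc (0:ℝ) T).norm_image_sub_le_of_norm_hasDerivWithin_le
    (C := 0) (f' := fun _ => (0:ℝ)) hh (fun x _ => by simp) (right_mem_Icc.mpr hT) ht
  simp only [zero_mul, Real.norm_eq_abs] at hb
  have hT0 : h T = 0 := by simp [hhdef, hgT]
  have ht0 : h t = 0 := by
    have := abs_nonneg (h t - h T); have h2 : |h t - h T| = 0 := le_antisymm hb this
    have := abs_eq_zero.mp h2; linarith [hT0]
  have : Real.exp (I t) * g t = 0 := ht0
  rcases mul_eq_zero.mp this with h | h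
  · exact absurd h (Real.exp_ne_zero _)
  · exact h




open Set

/-- `B̄₁(t) = b₀(t) + Σᵢ₌₁³ aᵢ(t)bᵢ(t)`. -/
noncomputable def Bbar1 (a₁ a₂ a₃ b₀ b₁ b₂ b₃ : ℝ → ℝ) : ℝ → ℝ :=
  fun t => b₀ t + (a₁ t * b₁ t + a₂ t * b₂ t + a₃ t * b₃ t)

/-- `S(t) = Σᵢ₌₁³ bᵢ(t)²`. -/
noncomputable def Ssum (b₁ b₂ b₃ : ℝ → ℝ) : ℝ → ℝ :=
  fun t => b₁ t ^ 2 + b₂ t ^ 2 + b₃ t ^ 2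

/-- `P` (with derivative `Pd`) is a C¹ solution on `[0,T]` of the summed Riccati
equation `P̃' + 2a₀P̃ + (Σᵢ aᵢ²)P̃ + Q₁ + Q₂ + B̄₁P̃²/(R + SP̃) = 0`, `P̃(T) = G₁ + G₂`,
with `R + SP̃ > 0` on `[0,T]`. -/
def SummedRiccatiSol (T : ℝ) (a₀ a₁ a₂ a₃ Q₁ Q₂ R Bbar S : ℝ → ℝ) (G₁ G₂ : ℝ)
    (P Pd : ℝ → ℝ) : Prop :=
  (∀ t ∈ Icc (0 : ℝ) T, HasDerivWithinAt P (Pd t) (Icc (0 : ℝ) T) t) ∧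
  ContinuousOn Pd (Icc (0 : ℝ) T) ∧
  (∀ t ∈ Icc (0 : ℝ) T,
    Pd t + 2 * a₀ t * P t + (a₁ t ^ 2 + a₂ t ^ 2 + a₃ t ^ 2) * P t
      + Q₁ t + Q₂ t + Bbar t * P t ^ 2 / (R t + S t * P t) = 0) ∧
  P T = G₁ + G₂ ∧
  (∀ t ∈ Icc (0 : ℝ) T, 0 < R t + S t * P t)

/-- `(P₁, P₂)` (with derivatives `P₁d, P₂d`) is an admissible C¹ solution pair on `[0,T]`
of the coupled Riccati system `P_j' + 2a₀P_j + (Σᵢ aᵢ²)P_j + Q_j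
+ B̄₁P_j(P₁+P₂)/(R + S(P₁+P₂)) = 0`, `P_j(T) = G_j`, j = 1,2,
with `R + S(P₁+P₂) > 0` on `[0,T]`. -/
def CoupledRiccatiSol (T : ℝ) (a₀ a₁ a₂ a₃ Q₁ Q₂ R Bbar S : ℝ → ℝ) (G₁ G₂ : ℝ)
    (P₁ P₂ P₁d P₂d : ℝ → ℝ) : Prop :=
  (∀ t ∈ Icc (0 : ℝ) T, HasDerivWithinAt P₁ (P₁d t) (Icc (0 : ℝ) T) t) ∧
  (∀ t ∈ Icc (0 : ℝ) T, HasDerivWithinAt P₂ (P₂d t) (Icc (0 : ℝ) T) t) ∧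
  ContinuousOn P₁d (Icc (0 : ℝ) T) ∧ ContinuousOn P₂d (Icc (0 : ℝ) T) ∧
  (∀ t ∈ Icc (0 : ℝ) T,
    P₁d t + 2 * a₀ t * P₁ t + (a₁ t ^ 2 + a₂ t ^ 2 + a₃ t ^ 2) * P₁ t + Q₁ t
      + Bbar t * P₁ t * (P₁ t + P₂ t) / (R t + S t * (P₁ t + P₂ t)) = 0) ∧
  (∀ t ∈ Icc (0 : ℝ) T,
    P₂d t + 2 * a₀ t * P₂ t + (a₁ t ^ 2 + a₂ t ^ 2 + a₃ t ^ 2) * P₂ t + Q₂ t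
      + Bbar t * P₂ t * (P₁ t + P₂ t) / (R t + S t * (P₁ t + P₂ t)) = 0) ∧
  P₁ T = G₁ ∧ P₂ T = G₂ ∧
  (∀ t ∈ Icc (0 : ℝ) T, 0 < R t + S t * (P₁ t + P₂ t))

/-- `P` (with derivative `Pd`) is a C¹ solution on `[0,T]` of the linear auxiliary
terminal-value ODE `P' + 2a₀P + (Σᵢ aᵢ²)P + Qj + B̄₁P·P̃/(R + SP̃) = 0`, `P(T) = Gj`,
obtained by freezing the nonlinearity at a given `P̃`. -/
def AuxLinearSol (T : ℝ) (a₀ a₁ a₂ a₃ Qj R Bbar S Ptilde : ℝ → ℝ) (Gj : ℝ)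
    (P Pd : ℝ → ℝ) : Prop :=
  (∀ t ∈ Icc (0 : ℝ) T, HasDerivWithinAt P (Pd t) (Icc (0 : ℝ) T) t) ∧
  ContinuousOn Pd (Icc (0 : ℝ) T) ∧
  (∀ t ∈ Icc (0 : ℝ) T,
    Pd t + 2 * a₀ t * P t + (a₁ t ^ 2 + a₂ t ^ 2 + a₃ t ^ 2) * P t + Qj t
      + Bbar t * P t * Ptilde t / (R t + S t * Ptilde t) = 0) ∧
  P T = Gj

/-- Lemma 3.1: solvability of the coupled Riccati system under the
symmetry assumption (A3). If the summed Riccati equation admits a unique C¹ solution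
on `[0,T]`, then the coupled Riccati system admits exactly one admissible solution
pair `(P₁, P₂)`. -/
theorem coupled_riccati_unique_solvability
    (T : ℝ) (hT : 0 < T)
    (a₀ a₁ a₂ a₃ b₀ b₁ b₂ b₃ Q₁ Q₂ R : ℝ → ℝ)
    (ha₀ : ContinuousOn a₀ (Icc 0 T)) (ha₁ : ContinuousOn a₁ (Icc 0 T))
    (ha₂ : ContinuousOn a₂ (Icc 0 T)) (ha₃ : ContinuousOn a₃ (Icc 0 T))
    (hb₀ : ContinuousOn b₀ (Icc 0 T)) (hb₁ : ContinuousOn b₁ (Icc 0 T))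
    (hb₂ : ContinuousOn b₂ (Icc 0 T)) (hb₃ : ContinuousOn b₃ (Icc 0 T))
    (hQ₁c : ContinuousOn Q₁ (Icc 0 T)) (hQ₂c : ContinuousOn Q₂ (Icc 0 T))
    (hRc : ContinuousOn R (Icc 0 T))
    (hR : ∀ t ∈ Icc (0 : ℝ) T, 0 < R t)
    (hQ₁ : ∀ t ∈ Icc (0 : ℝ) T, 0 ≤ Q₁ t) (hQ₂ : ∀ t ∈ Icc (0 : ℝ) T, 0 ≤ Q₂ t)
    (G₁ G₂ : ℝ) (hG₁ : 0 ≤ G₁) (hG₂ : 0 ≤ G₂)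
    (hsum : ∃ Pt Ptd : ℝ → ℝ,
      SummedRiccatiSol T a₀ a₁ a₂ a₃ Q₁ Q₂ R
        (Bbar1 a₁ a₂ a₃ b₀ b₁ b₂ b₃) (Ssum b₁ b₂ b₃) G₁ G₂ Pt Ptd ∧
      ∀ Qt Qtd : ℝ → ℝ,
        SummedRiccatiSol T a₀ a₁ a₂ a₃ Q₁ Q₂ R
          (Bbar1 a₁ a₂ a₃ b₀ b₁ b₂ b₃) (Ssum b₁ b₂ b₃) G₁ G₂ Qt Qtd →
        EqOn Qt Pt (Icc 0 T)) :
    ∃ P₁ P₂ P₁d P₂d : ℝ → ℝ,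
      CoupledRiccatiSol T a₀ a₁ a₂ a₃ Q₁ Q₂ R
        (Bbar1 a₁ a₂ a₃ b₀ b₁ b₂ b₃) (Ssum b₁ b₂ b₃) G₁ G₂ P₁ P₂ P₁d P₂d ∧
      ∀ S₁ S₂ S₁d S₂d : ℝ → ℝ,
        CoupledRiccatiSol T a₀ a₁ a₂ a₃ Q₁ Q₂ R
          (Bbar1 a₁ a₂ a₃ b₀ b₁ b₂ b₃) (Ssum b₁ b₂ b₃) G₁ G₂ S₁ S₂ S₁d S₂d →
        EqOn S₁ P₁ (Icc 0 T) ∧ EqOn S₂ P₂ (Icc 0 T) := by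
  obtain ⟨Pt, Ptd, ⟨hPtderiv, hPtdcont, hPteq, hPtT, hPtD⟩, huniq⟩ := hsum
  set Bb := Bbar1 a₁ a₂ a₃ b₀ b₁ b₂ b₃ with hBbdef
  set Ss := Ssum b₁ b₂ b₃ with hSsdef
  have hBbc : ContinuousOn Bb (Icc 0 T) := by
    rw [hBbdef]; unfold Bbar1
    exact hb₀.add (((ha₁.mul hb₁).add (ha₂.mul hb₂)).add (ha₃.mul hb₃))
  have hSsc : ContinuousOn Ss (Icc 0 T) := by
    rw [hSsdef]; unfold Ssum
    exact ((hb₁.pow 2).add (hb₂.pow 2)).add (hb₃.pow 2)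
  have hPtc : ContinuousOn Pt (Icc 0 T) := fun t ht => (hPtderiv t ht).continuousWithinAt
  set c : ℝ → ℝ := fun t => max 0 (min t T) with hcdef
  have hcc : Continuous c := continuous_const.max (continuous_id.min continuous_const)
  have hcmem : ∀ t, c t ∈ Icc (0:ℝ) T := by
    intro t
    refine ⟨le_max_left _ _, max_le hT.le (min_le_right _ _)⟩
  have hcid : ∀ t ∈ Icc (0:ℝ) T, c t = t := by
    intro t ht; simp only [hcdef]; rw [min_eq_left ht.2, max_eq_right ht.1]
  have hcomp : ∀ {f : ℝ → ℝ}, ContinuousOn f (Icc 0 T) → Continuous (fun t => f (c t)) :=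
    fun hf => hf.comp_continuous hcc hcmem
  set α : ℝ → ℝ := fun t => (2 * a₀ (c t) + (a₁ (c t) ^ 2 + a₂ (c t) ^ 2 + a₃ (c t) ^ 2))
      + Bb (c t) * Pt (c t) / (R (c t) + Ss (c t) * Pt (c t)) with hαdef
  set q : ℝ → ℝ := fun t => Q₁ (c t) with hqdef
  have hdenpos : ∀ t, 0 < R (c t) + Ss (c t) * Pt (c t) := fun t => hPtD (c t) (hcmem t)
  have hαc : Continuous α := by
    rw [hαdef]
    exact ((continuous_const.mul (hcomp ha₀)).add
        ((((hcomp ha₁).pow 2).add ((hcomp ha₂).pow 2)).add ((hcomp ha₃).pow 2))).add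
      (Continuous.div ((hcomp hBbc).mul (hcomp hPtc))
        ((hcomp hRc).add ((hcomp hSsc).mul (hcomp hPtc))) (fun t => (hdenpos t).ne'))
  have hqc : Continuous q := hcomp hQ₁c
  set P₁ := linP α q T G₁ with hP₁def
  set P₁d : ℝ → ℝ := fun t => -(α t * P₁ t + q t) with hP₁ddef
  have hP₁deriv : ∀ t, HasDerivAt P₁ (P₁d t) t := fun t => linP_hasDerivAt hαc hqc T G₁ t
  have hP₁c : Continuous P₁ := Differentiable.continuous (fun t => (hP₁deriv t).differentiableAt)
  have hP₁dc : Continuous P₁d := by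
    rw [hP₁ddef]; exact ((hαc.mul hP₁c).add hqc).neg
  have hE1 : ∀ t ∈ Icc (0:ℝ) T,
      P₁d t + 2 * a₀ t * P₁ t + (a₁ t ^ 2 + a₂ t ^ 2 + a₃ t ^ 2) * P₁ t + Q₁ t
        + Bb t * P₁ t * Pt t / (R t + Ss t * Pt t) = 0 := by
    intro t ht
    have hc' := hcid t ht
    simp only [hP₁ddef, hαdef, hqdef, hc']
    ring
  set P₂ : ℝ → ℝ := fun t => Pt t - P₁ t with hP₂def
  set P₂d : ℝ → ℝ := fun t => Ptd t - P₁d t with hP₂ddef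
  have hP₁T : P₁ T = G₁ := by rw [hP₁def]; exact linP_T α q T G₁
  refine ⟨P₁, P₂, P₁d, P₂d, ⟨?_, ?_, ?_, ?_, ?_, ?_, ?_, ?_, ?_⟩, ?_⟩
  · exact fun t ht => (hP₁deriv t).hasDerivWithinAt
  · intro t ht
    simp only [hP₂def, hP₂ddef]
    exact (hPtderiv t ht).sub (hP₁deriv t).hasDerivWithinAt
  · exact hP₁dc.continuousOn
  · simp only [hP₂ddef]
    exact hPtdcont.sub hP₁dc.continuousOn
  · intro t ht
    have hPP : P₁ t + P₂ t = Pt t := by simp only [hP₂def]; ring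
    rw [hPP]
    exact hE1 t ht
  · intro t ht
    have hPP : P₁ t + P₂ t = Pt t := by simp only [hP₂def]; ring
    rw [hPP]
    simp only [hP₂def, hP₂ddef]
    linear_combination (hPteq t ht) - (hE1 t ht)
  · exact hP₁T
  · simp only [hP₂def]
    rw [hPtT, hP₁T]; ring
  · intro t ht
    have hPP : P₁ t + P₂ t = Pt t := by simp only [hP₂def]; ring
    rw [hPP]
    exact hPtD t ht
  · intro S₁ S₂ S₁d S₂d hS
    obtain ⟨hS1d, hS2d, hS1dc, hS2dc, hSeq1, hSeq2, hS1T, hS2T, hSD⟩ := hS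
    have hQt : SummedRiccatiSol T a₀ a₁ a₂ a₃ Q₁ Q₂ R Bb Ss G₁ G₂
        (fun t => S₁ t + S₂ t) (fun t => S₁d t + S₂d t) := by
      refine ⟨fun t ht => (hS1d t ht).add (hS2d t ht), hS1dc.add hS2dc, ?_,
        by show S₁ T + S₂ T = G₁ + G₂; rw [hS1T, hS2T], ?_⟩
      · intro t ht
        linear_combination (hSeq1 t ht) + (hSeq2 t ht)
      · exact hSD
    have hQP := huniq _ _ hQt
    have hg0 : ∀ t ∈ Icc (0:ℝ) T, S₁ t - P₁ t = 0 := by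
      refine linODE_unique T hT.le hαc (fun t => S₁ t - P₁ t) (fun t => S₁d t - P₁d t)
        (fun t ht => (hS1d t ht).sub (hP₁deriv t).hasDerivWithinAt) ?_ ?_
      · intro t ht
        have hc' := hcid t ht
        have hsum' : S₁ t + S₂ t = Pt t := hQP ht
        have h1 := hSeq1 t ht
        rw [hsum'] at h1
        have hαt : α t = 2 * a₀ t + (a₁ t ^ 2 + a₂ t ^ 2 + a₃ t ^ 2)
            + Bb t * Pt t / (R t + Ss t * Pt t) := by simp only [hαdef, hc']
        show S₁d t - P₁d t = -(α t * (S₁ t - P₁ t))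
        rw [hαt]
        linear_combination h1 - (hE1 t ht)
      · show S₁ T - P₁ T = 0
        rw [hS1T, hP₁T]; ring
    constructor
    · intro t ht
      have := hg0 t ht
      linarith
    · intro t ht
      have h1 : S₁ t - P₁ t = 0 := hg0 t ht
      have h2 : S₁ t + S₂ t = Pt t := hQP ht
      simp only [hP₂def]
      linarith
end

section
/- (Existence step in the proof of Lemma 3.1.) Let P̃ be a C¹ solution on [0,T] of the summed Riccati equation P̃'(t) + 2a₀(t)P̃(t) + (Σᵢ₌₁³ aᵢ(t)²)P̃(t) + Q₁(t) + Q₂(t) + B̄₁(t)P̃(t)² / (R(t) + S(t)P̃(t)) = 0 with P̃(T) = G₁ + G₂ and R(t) + S(t)P̃(t) > 0 on [0,T], and let P₁, P₂ be C¹ solutions on [0,T] of the linear auxiliary terminal-value ODEs P_j'(t) + 2a₀(t)P_j(t) + (Σᵢ₌₁³ aᵢ(t)²)P_j(t) + Q_j(t) + B̄₁(t)P_j(t)P̃(t) / (R(t) + S(t)P̃(t)) = 0 with P_j(T) = G_j (j = 1, 2). Then (P₁, P₂) is an admissible solution pair of the coupled Riccati system: for j = 1, 2, P_j'(t) + 2a₀(t)P_j(t)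 + (Σᵢ₌₁³ aᵢ(t)²)P_j(t) + Q_j(t) + B̄₁(t)P_j(t)(P₁(t)+P₂(t)) / (R(t) + S(t)(P₁(t)+P₂(t))) = 0 on [0,T], P_j(T) = G_j, and R(t) + S(t)(P₁(t)+P₂(t)) > 0 on [0,T]. -/
open Set

/-- existence step in the proof of Lemma 3.1. If `P̃` is a C¹ solution
of the summed Riccati equation and `P₁, P₂` solve the linear auxiliary terminal-value
ODEs obtained by freezing the nonlinearity at `P̃`, then `(P₁, P₂)` is an admissible
solution pair of the coupled Riccati system. -/
theorem aux_linear_solutions_solve_coupled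
    (T : ℝ) (hT : 0 < T)
    (a₀ a₁ a₂ a₃ b₀ b₁ b₂ b₃ Q₁ Q₂ R : ℝ → ℝ)
    (ha₀ : ContinuousOn a₀ (Icc 0 T)) (ha₁ : ContinuousOn a₁ (Icc 0 T))
    (ha₂ : ContinuousOn a₂ (Icc 0 T)) (ha₃ : ContinuousOn a₃ (Icc 0 T))
    (hb₀ : ContinuousOn b₀ (Icc 0 T)) (hb₁ : ContinuousOn b₁ (Icc 0 T))
    (hb₂ : ContinuousOn b₂ (Icc 0 T)) (hb₃ : ContinuousOn b₃ (Icc 0 T))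
    (hQ₁c : ContinuousOn Q₁ (Icc 0 T)) (hQ₂c : ContinuousOn Q₂ (Icc 0 T))
    (hRc : ContinuousOn R (Icc 0 T))
    (hR : ∀ t ∈ Icc (0 : ℝ) T, 0 < R t)
    (hQ₁ : ∀ t ∈ Icc (0 : ℝ) T, 0 ≤ Q₁ t) (hQ₂ : ∀ t ∈ Icc (0 : ℝ) T, 0 ≤ Q₂ t)
    (G₁ G₂ : ℝ) (hG₁ : 0 ≤ G₁) (hG₂ : 0 ≤ G₂)
    (Ptilde Ptilded P₁ P₂ P₁d P₂d : ℝ → ℝ)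
    (hPt : SummedRiccatiSol T a₀ a₁ a₂ a₃ Q₁ Q₂ R
      (Bbar1 a₁ a₂ a₃ b₀ b₁ b₂ b₃) (Ssum b₁ b₂ b₃) G₁ G₂ Ptilde Ptilded)
    (hP₁ : AuxLinearSol T a₀ a₁ a₂ a₃ Q₁ R
      (Bbar1 a₁ a₂ a₃ b₀ b₁ b₂ b₃) (Ssum b₁ b₂ b₃) Ptilde G₁ P₁ P₁d)
    (hP₂ : AuxLinearSol T a₀ a₁ a₂ a₃ Q₂ R
      (Bbar1 a₁ a₂ a₃ b₀ b₁ b₂ b₃) (Ssum b₁ b₂ b₃) Ptilde G₂ P₂ P₂d) :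
    CoupledRiccatiSol T a₀ a₁ a₂ a₃ Q₁ Q₂ R
      (Bbar1 a₁ a₂ a₃ b₀ b₁ b₂ b₃) (Ssum b₁ b₂ b₃) G₁ G₂ P₁ P₂ P₁d P₂d := by
  obtain ⟨hPt1, hPt2, hPt3, hPt4, hPt5⟩ := hPt
  obtain ⟨h11, h12, h13, h14⟩ := hP₁
  obtain ⟨h21, h22, h23, h24⟩ := hP₂
  set Bb := Bbar1 a₁ a₂ a₃ b₀ b₁ b₂ b₃ with hBb
  set Ss := Ssum b₁ b₂ b₃ with hSs
  -- continuity facts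
  have hPtc : ContinuousOn Ptilde (Icc 0 T) := fun t ht => (hPt1 t ht).continuousWithinAt
  have hBbc : ContinuousOn Bb (Icc 0 T) := by
    exact hb₀.add (((ha₁.mul hb₁).add (ha₂.mul hb₂)).add (ha₃.mul hb₃))
  have hSsc : ContinuousOn Ss (Icc 0 T) := by
    exact ((hb₁.pow 2).add (hb₂.pow 2)).add (hb₃.pow 2)
  -- the linear coefficient
  set L : ℝ → ℝ := fun t => 2 * a₀ t + (a₁ t ^ 2 + a₂ t ^ 2 + a₃ t ^ 2)
      + Bb t * Ptilde t / (R t + Ss t * Ptilde t) with hL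
  have hden : ∀ t ∈ Icc (0 : ℝ) T, R t + Ss t * Ptilde t ≠ 0 :=
    fun t ht => ne_of_gt (hPt5 t ht)
  have hLc : ContinuousOn L (Icc 0 T) := by
    apply ContinuousOn.add
    · exact (continuousOn_const.mul ha₀).add (((ha₁.pow 2).add (ha₂.pow 2)).add (ha₃.pow 2))
    · exact (hBbc.mul hPtc).div (hRc.add (hSsc.mul hPtc)) hden
  obtain ⟨C, hC⟩ := (isCompact_Icc.image_of_continuousOn hLc).isBounded.subset_closedBall 0
  have hCb : ∀ t ∈ Icc (0 : ℝ) T, |L t| ≤ C := by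
    intro t ht
    have := hC ⟨t, ht, rfl⟩
    simpa [Real.dist_eq] using this
  -- clamp to [0,T]
  set cl : ℝ → ℝ := fun t => max 0 (min t T) with hcl
  have hclmem : ∀ t, cl t ∈ Icc (0 : ℝ) T := by
    intro t
    constructor
    · exact le_max_left _ _
    · exact max_le hT.le (min_le_right _ _)
  have hclid : ∀ t ∈ Icc (0 : ℝ) T, cl t = t := by
    intro t ht
    simp [hcl, min_eq_left ht.2, max_eq_right ht.1]
  set K : NNReal := Real.toNNReal C with hK
  set v : ℝ → ℝ → ℝ := fun t x => -(L (cl t) * x + (Q₁ (cl t) + Q₂ (cl t))) with hv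
  have hvlip : ∀ t, LipschitzOnWith K (v t) univ := by
    intro t
    apply LipschitzOnWith.of_dist_le_mul
    intro x _ y _
    have hsub : v t x - v t y = -(L (cl t)) * (x - y) := by
      simp only [hv]; ring
    rw [Real.dist_eq, Real.dist_eq, hsub, abs_mul, abs_neg]
    gcongr
    exact (hCb _ (hclmem t)).trans (Real.le_coe_toNNReal C)
  -- P₁ + P₂ and Ptilde both solve x' = v t x on [0,T] with same terminal value
  have hEq : EqOn (fun t => P₁ t + P₂ t) Ptilde (Icc 0 T) := by
    apply ODE_solution_unique_of_mem_Icc_left (v := v) (s := fun _ => (univ : Set ℝ))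
      (K := K) (fun t _ => hvlip t)
    · exact fun t ht => ((h11 t ht).add (h21 t ht)).continuousWithinAt
    · intro t ht
      have ht' : t ∈ Icc (0 : ℝ) T := ⟨ht.1.le, ht.2⟩
      have hd : HasDerivWithinAt (fun t => P₁ t + P₂ t) (P₁d t + P₂d t) (Icc (0 : ℝ) T) t :=
        (h11 t ht').add (h21 t ht')
      have hval : v t (P₁ t + P₂ t) = P₁d t + P₂d t := by
        have e1 := h13 t ht'
        have e2 := h23 t ht'
        simp only [hv, hL, hclid t ht']
        have hd0 := hden t ht'
        field_simp at e1 e2 ⊢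
        linear_combination -e1 - e2
      rw [← hval] at hd
      exact hd.mono_of_mem_nhdsWithin (Icc_mem_nhdsLE_of_mem ⟨ht.1, ht.2⟩)
    · exact fun t _ => mem_univ _
    · exact hPtc
    · intro t ht
      have ht' : t ∈ Icc (0 : ℝ) T := ⟨ht.1.le, ht.2⟩
      have hd := hPt1 t ht'
      have hval : v t (Ptilde t) = Ptilded t := by
        have e := hPt3 t ht'
        simp only [hv, hL, hclid t ht']
        have hd0 := hden t ht'
        field_simp at e ⊢
        linear_combination -e
      rw [← hval] at hd
      exact hd.mono_of_mem_nhdsWithin (Icc_mem_nhdsLE_of_mem ⟨ht.1, ht.2⟩)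
    · exact fun t _ => mem_univ _
    · simp [h14, h24, hPt4]
  refine ⟨h11, h21, h12, h22, ?_, ?_, h14, h24, ?_⟩
  · intro t ht
    rw [show P₁ t + P₂ t = Ptilde t from hEq ht]
    exact h13 t ht
  · intro t ht
    rw [show P₁ t + P₂ t = Ptilde t from hEq ht]
    exact h23 t ht
  · intro t ht
    rw [show P₁ t + P₂ t = Ptilde t from hEq ht]
    exact hPt5 t ht
end
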